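/- Let z₁,…,z_N ∈ ℝ^d be points with binary labels y₁,…,y_N ∈ {0,1} that are linearly separable, i.e. there exist v ∈ ℝ^d with ‖v‖ = 1 and b ∈ ℝ such that vᵀz_i > b whenever y_i = 1 and vᵀz_i < b whenever y_i = 0. Then there exist prototypes w₀, w₁ ∈ ℝ^d and, for every λ > 0, symmetric positive semidefinite real d×d matrices M₀(λ), M₁(λ) such that: (i) for every i ∈ {1,…,N}, the pointwise cross-entropy loss L(z_i, y_i) of the quadratic probe with parameters (w₀, w₁, M₀(λ), M₁(λ)) tends to 0 as λ → +∞, and (ii) for each k ∈ {0,1}, ‖M_k(λ)‖_F → +∞ as λ → +∞. -/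

import Mathlib

open Matrix Filter

/-- Mahalanobis-type quadratic form `‖z − w‖²_M = (z − w)ᵀ M (z − w)`. -/
noncomputable def quadDist {d : ℕ} (M : Matrix (Fin d) (Fin d) ℝ) (z w : Fin d → ℝ) : ℝ :=
  (z - w) ⬝ᵥ M.mulVec (z - w)

/-- Frobenius norm of a matrix: `‖M‖_F = √(∑ i j, M i j ^ 2)`. -/
noncomputable def frobNorm {d : ℕ} (M : Matrix (Fin d) (Fin d) ℝ) : ℝ :=
  Real.sqrt (∑ i, ∑ j, (M i j) ^ 2)

/-- Quadratic-probe probability of class `k` at point `z`. -/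
noncomputable def qProb {d : ℕ} (w : Fin 2 → Fin d → ℝ)
    (M : Fin 2 → Matrix (Fin d) (Fin d) ℝ) (k : Fin 2) (z : Fin d → ℝ) : ℝ :=
  Real.exp (-(quadDist (M k) z (w k))) /
    (Real.exp (-(quadDist (M 0) z (w 0))) + Real.exp (-(quadDist (M 1) z (w 1))))

/-- Pointwise cross-entropy loss of the quadratic probe: `L(z, y) = −log p_y(z)`. -/
noncomputable def ceLoss {d : ℕ} (w : Fin 2 → Fin d → ℝ)
    (M : Fin 2 → Matrix (Fin d) (Fin d) ℝ) (z : Fin d → ℝ) (y : Fin 2) : ℝ :=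
  -Real.log (qProb w M y z)

/-- Softmax cross-entropy algebra: `−log (e^{−a} / (e^{−a} + e^{−c})) = log (1 + e^{a−c})`. -/
lemma celog (a c : ℝ) :
    -Real.log (Real.exp (-a) / (Real.exp (-a) + Real.exp (-c)))
      = Real.log (1 + Real.exp (a - c)) := by
  rw [← Real.log_inv]
  congr 1
  rw [inv_div, add_div, div_self (Real.exp_ne_zero _), ← Real.exp_sub]
  ring_nf

/-- The quadratic form of a scaled rank-one matrix. -/
lemma rankone_quad {d : ℕ} (v : Fin d → ℝ) (lam : ℝ) (x : Fin d → ℝ) :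
    x ⬝ᵥ (lam • Matrix.vecMulVec v v) *ᵥ x = lam * (v ⬝ᵥ x) ^ 2 := by
  have hsq : (v ⬝ᵥ x) ^ 2 = ∑ i, ∑ j, (v i * x i) * (v j * x j) := by
    rw [sq, dotProduct, Finset.sum_mul_sum]
  rw [hsq]
  simp only [Matrix.mulVec, dotProduct, Matrix.smul_apply, Matrix.vecMulVec_apply,
    smul_eq_mul, Finset.mul_sum]
  apply Finset.sum_congr rfl
  intro i _
  apply Finset.sum_congr rfl
  intro j _
  ring

/-- If the labeled points are linearly separable, there are prototypes `w₀, w₁` and, for every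
`λ > 0`, symmetric PSD matrices `M₀(λ), M₁(λ)` such that every pointwise cross-entropy loss of
the quadratic probe tends to `0` while the Frobenius norms of the `M_k(λ)` blow up, as
`λ → +∞`. -/
theorem quadratic_probe_degenerate {d N : ℕ}
    (z : Fin N → Fin d → ℝ) (y : Fin N → Fin 2)
    (v : Fin d → ℝ) (b : ℝ) (hv : Real.sqrt (v ⬝ᵥ v) = 1)
    (hsep1 : ∀ i, y i = 1 → b < v ⬝ᵥ z i)
    (hsep0 : ∀ i, y i = 0 → v ⬝ᵥ z i < b) :
    ∃ w : Fin 2 → Fin d → ℝ, ∃ M : ℝ → Fin 2 → Matrix (Fin d) (Fin d) ℝ,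
      (∀ lam : ℝ, 0 < lam → ∀ k, (M lam k).PosSemidef) ∧
      (∀ i, Tendsto (fun lam : ℝ => ceLoss w (M lam) (z i) (y i)) atTop (nhds 0)) ∧
      (∀ k, Tendsto (fun lam : ℝ => frobNorm (M lam k)) atTop atTop) := by
  have hvv : v ⬝ᵥ v = 1 := by
    have h0 : 0 ≤ v ⬝ᵥ v := by
      simp only [dotProduct]
      exact Finset.sum_nonneg fun i _ => mul_self_nonneg _
    nlinarith [Real.sq_sqrt h0, hv]
  set A : Matrix (Fin d) (Fin d) ℝ := Matrix.vecMulVec v v with hA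
  refine ⟨![(b - 1) • v, (b + 1) • v], fun lam _ => lam • A, ?_, ?_, ?_⟩
  · -- PSD
    intro lam hlam k
    rw [Matrix.posSemidef_iff_dotProduct_mulVec]
    constructor
    · ext i j
      simp [hA, Matrix.vecMulVec_apply, mul_comm]
    · intro x
      rw [star_trivial, hA, rankone_quad]
      positivity
  · -- losses → 0
    intro i
    have hquad : ∀ (lam : ℝ) (x w' : Fin d → ℝ),
        quadDist (lam • A) x w' = lam * (v ⬝ᵥ (x - w')) ^ 2 := by
      intro lam x w'
      rw [quadDist, hA, rankone_quad]
    have hdot : ∀ (c : ℝ), v ⬝ᵥ (z i - c • v) = v ⬝ᵥ z i - c := by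
      intro c
      rw [dotProduct_sub, dotProduct_smul, smul_eq_mul, hvv, mul_one]
    set t : ℝ := v ⬝ᵥ z i with ht
    have hq0 : ∀ lam : ℝ, quadDist (lam • A) (z i) ((b - 1) • v) = lam * (t - (b - 1)) ^ 2 := by
      intro lam; rw [hquad, hdot]
    have hq1 : ∀ lam : ℝ, quadDist (lam • A) (z i) ((b + 1) • v) = lam * (t - (b + 1)) ^ 2 := by
      intro lam; rw [hquad, hdot]
    have key : ∃ C : ℝ, C < 0 ∧ ∀ lam : ℝ,
        ceLoss ![(b - 1) • v, (b + 1) • v] (fun _ => lam • A) (z i) (y i)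
          = Real.log (1 + Real.exp (lam * C)) := by
      have h2 : y i = 0 ∨ y i = 1 := by omega
      rcases h2 with hy | hy
      · refine ⟨(t - (b - 1)) ^ 2 - (t - (b + 1)) ^ 2, by nlinarith [hsep0 i hy], fun lam => ?_⟩
        simp only [ceLoss, qProb, hy, Matrix.cons_val_zero, Matrix.cons_val_one,
          Matrix.head_cons, hq0, hq1]
        rw [celog]
        congr 2
        ring
      · refine ⟨(t - (b + 1)) ^ 2 - (t - (b - 1)) ^ 2, by nlinarith [hsep1 i hy], fun lam => ?_⟩
        simp only [ceLoss, qProb, hy, Matrix.cons_val_zero, Matrix.cons_val_one,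
          Matrix.head_cons, hq0, hq1]
        rw [add_comm (Real.exp (-(lam * (t - (b - 1)) ^ 2)))]
        rw [celog]
        congr 2
        ring
    obtain ⟨C, hC, hform⟩ := key
    have h1 : Tendsto (fun lam : ℝ => lam * C) atTop atBot :=
      tendsto_id.atTop_mul_const_of_neg hC
    have h2 : Tendsto (fun lam : ℝ => Real.exp (lam * C)) atTop (nhds 0) :=
      Real.tendsto_exp_atBot.comp h1
    have h3 : Tendsto (fun lam : ℝ => 1 + Real.exp (lam * C)) atTop (nhds 1) := by
      simpa using tendsto_const_nhds.add h2
    have h4 : Tendsto (fun lam : ℝ => Real.log (1 + Real.exp (lam * C))) atTop (nhds 0) := by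
      have := ((Real.continuousAt_log (by norm_num : (1:ℝ) ≠ 0)).tendsto).comp h3
      simpa [Function.comp_def] using this
    simpa only [hform] using h4
  · -- Frobenius norms blow up
    intro k
    have heq : ∀ lam : ℝ, frobNorm (lam • A) = |lam| := by
      intro lam
      have h1 : ∑ i, v i ^ 2 = 1 := by
        simpa [dotProduct, sq] using hvv
      have hs : ∑ i, ∑ j, ((lam • A) i j) ^ 2 = lam ^ 2 := by
        calc ∑ i, ∑ j, ((lam • A) i j) ^ 2
            = ∑ i, ∑ j, lam ^ 2 * (v i ^ 2 * v j ^ 2) := by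
              apply Finset.sum_congr rfl; intro i _
              apply Finset.sum_congr rfl; intro j _
              simp only [Matrix.smul_apply, hA, Matrix.vecMulVec_apply, smul_eq_mul]
              ring
          _ = lam ^ 2 * ((∑ i, v i ^ 2) * (∑ j, v j ^ 2)) := by
              rw [Finset.sum_mul_sum]
              simp only [Finset.mul_sum, mul_assoc]
          _ = lam ^ 2 := by rw [h1]; ring
      rw [frobNorm, hs, Real.sqrt_sq_eq_abs]
    simp only [heq]
    exact tendsto_abs_atTop_atTop
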